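/- Let A and B be commutative rings and let P be a module carrying both an A-module structure and a B-module structure whose scalar actions commute. Suppose P is finitely generated and projective as a B-module, and let P^∨ = Hom_B(P,B), endowed with the A-module structure (a·f)(p) = f(a·p). Then for every A-module M and every B-module N there is a bijection Hom_A(M, N ⊗_B P) ≃ Hom_B(M ⊗_A P^∨, N), natural in M and N, where N ⊗_B P is an A-module via the A-action on P and M ⊗_A P^∨ is a B-module via the B-action on P^∨. -/

import Mathlib

open TensorProduct

universe v w

section Dual

variable (A B : Type*) [CommRing A] [CommRing B]
variable (P : Type*) [AddCommGroup P] [Module A P] [Module B P] [SMulCommClass A B P]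

/-- The dual `P^∨ = Hom_B(P,B)` of a `(B,A)`-bimodule `P` (type synonym, to carry the
`(A,B)`-bimodule structure with `A` acting through the argument). -/
def DualMod : Type _ := P →ₗ[B] B

variable {B P} in
/-- An element of `DualMod B P` as an actual `B`-linear map `P → B`. -/
def DualMod.lin (f : DualMod B P) : P →ₗ[B] B := f

variable {B P} in
lemma DualMod.ext' {f g : DualMod B P} (h : ∀ p, f.lin p = g.lin p) : f = g :=
  LinearMap.ext h

noncomputable instance : AddCommGroup (DualMod B P) :=
  inferInstanceAs (AddCommGroup (P →ₗ[B] B))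

/-- The `R`-module structure on `P^∨ = Hom_B(P,B)`, for `R` acting on `P` commuting with
`B`, given by `(r • f) p = f (r • p)`.  For `R = B` this coincides with the pointwise
scaling (since `f` is `B`-linear), and for `R = A` it is the `A`-structure of the dual
`(A,B)`-bimodule. -/
noncomputable instance dualModule : Module A (DualMod B P) where
  smul a f := { toFun := fun p => f.lin (a • p),
                map_add' := fun p q => by
                  show f.lin (a • (p + q)) = f.lin (a • p) + f.lin (a • q)
                  rw [smul_add, map_add],
                map_smul' := fun b p => by
                  show f.lin (a • b • p) = b • f.lin (a • p)
                  rw [smul_comm a b p, map_smul] }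
  one_smul f := by
    apply DualMod.ext'; intro p
    show f.lin ((1 : A) • p) = f.lin p; rw [one_smul]
  mul_smul a a' f := by
    apply DualMod.ext'; intro p
    show f.lin ((a * a') • p) = f.lin (a' • a • p); rw [mul_comm, mul_smul]
  smul_zero a := by apply DualMod.ext'; intro p; rfl
  smul_add a f g := by apply DualMod.ext'; intro p; rfl
  add_smul a a' f := by
    apply DualMod.ext'; intro p
    show f.lin ((a + a') • p) = f.lin (a • p) + f.lin (a' • p)
    rw [add_smul, map_add]
  zero_smul f := by
    apply DualMod.ext'; intro p
    show f.lin ((0 : A) • p) = 0; rw [zero_smul, map_zero]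

variable {A B P} in
lemma dualModule_smul_apply (a : A) (f : DualMod B P) (p : P) :
    (a • f).lin p = f.lin (a • p) := rfl

instance : SMulCommClass B A P := SMulCommClass.symm A B P

noncomputable instance : SMulCommClass A B (DualMod B P) where
  smul_comm a b f := by
    apply DualMod.ext'; intro p
    rw [dualModule_smul_apply, dualModule_smul_apply, dualModule_smul_apply,
      dualModule_smul_apply, smul_comm]

end Dual



-- auxiliary lemmas
section Aux
variable {A B : Type*} [CommRing A] [CommRing B]
variable {P : Type*} [AddCommGroup P] [Module A P] [Module B P] [SMulCommClass A B P]

lemma DualMod.lin_add (f g : DualMod B P) (p : P) : (f + g).lin p = f.lin p + g.lin p := rfl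
lemma DualMod.lin_smulB (b : B) (f : DualMod B P) (p : P) : (b • f).lin p = b • f.lin p := by
  rw [dualModule_smul_apply, map_smul]

lemma DualMod.lin_sum {ι : Type*} (s : Finset ι) (F : ι → DualMod B P) (p : P) :
    (∑ i ∈ s, F i).lin p = ∑ i ∈ s, (F i).lin p :=
  map_sum (AddMonoidHom.mk' (fun f : DualMod B P => f.lin p) (fun _ _ => rfl)) F s

variable (N : Type*) [AddCommGroup N] [Module B N]

noncomputable def contractMap (f : DualMod B P) : P ⊗[B] N →ₗ[B] N :=
  TensorProduct.lift ((LinearMap.lsmul B N) ∘ₗ f.lin)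

@[simp] lemma contractMap_tmul (f : DualMod B P) (p : P) (n : N) :
    contractMap N f (p ⊗ₜ n) = f.lin p • n := rfl

lemma contractMap_zero (x : P ⊗[B] N) : contractMap N (0 : DualMod B P) x = 0 := by
  induction x with
  | zero => simp
  | tmul p n =>
      rw [contractMap_tmul]
      show (0 : P →ₗ[B] B) p • n = 0
      simp
  | add x y hx hy => rw [map_add, hx, hy, add_zero]

lemma contractMap_add (f g : DualMod B P) (x : P ⊗[B] N) :
    contractMap N (f + g) x = contractMap N f x + contractMap N g x := by
  induction x with
  | zero => simp
  | tmul p n => simp [DualMod.lin_add, add_smul]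
  | add x y hx hy => simp only [map_add, hx, hy]; abel

lemma contractMap_smulA (a : A) (f : DualMod B P) (x : P ⊗[B] N) :
    contractMap N (a • f) x = contractMap N f (a • x) := by
  induction x with
  | zero => simp
  | tmul p n =>
      rw [smul_tmul', contractMap_tmul, contractMap_tmul, dualModule_smul_apply]
  | add x y hx hy => simp only [map_add, smul_add, hx, hy]

lemma contractMap_smulB (b : B) (f : DualMod B P) (x : P ⊗[B] N) :
    contractMap N (b • f) x = b • contractMap N f x := by
  induction x with
  | zero => simp
  | tmul p n => rw [contractMap_tmul, contractMap_tmul, DualMod.lin_smulB, smul_assoc]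
  | add x y hx hy => simp only [map_add, smul_add, hx, hy]

variable (M : Type*) [AddCommGroup M] [Module A M]

noncomputable def fwdAux (φ : M →ₗ[A] P ⊗[B] N) : (DualMod B P) ⊗[A] M →+ N :=
  TensorProduct.liftAddHom
    { toFun := fun f =>
        { toFun := fun m => contractMap N f (φ m)
          map_zero' := by simp
          map_add' := fun m m' => by simp }
      map_zero' := by ext m; exact contractMap_zero N (φ m)
      map_add' := fun f g => by ext m; exact contractMap_add N f g (φ m) }
    (fun a f m => by
      show contractMap N (a • f) (φ m) = contractMap N f (φ (a • m))
      rw [map_smul, contractMap_smulA])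

@[simp] lemma fwdAux_tmul (φ : M →ₗ[A] P ⊗[B] N) (f : DualMod B P) (m : M) :
    fwdAux N M φ (f ⊗ₜ m) = contractMap N f (φ m) :=
  TensorProduct.liftAddHom_tmul _ _ _ _

noncomputable def fwd (φ : M →ₗ[A] P ⊗[B] N) : (DualMod B P) ⊗[A] M →ₗ[B] N :=
  { toFun := fwdAux N M φ
    map_add' := (fwdAux N M φ).map_add
    map_smul' := fun b x => by
      show fwdAux N M φ (b • x) = b • fwdAux N M φ x
      induction x with
      | zero => simp
      | tmul f m =>
          rw [smul_tmul', fwdAux_tmul, fwdAux_tmul]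
          exact contractMap_smulB N b f (φ m)
      | add x y hx hy => rw [smul_add, map_add, map_add, hx, hy, smul_add] }

@[simp] lemma fwd_tmul (φ : M →ₗ[A] P ⊗[B] N) (f : DualMod B P) (m : M) :
    fwd N M φ (f ⊗ₜ m) = contractMap N f (φ m) := fwdAux_tmul N M φ f m

end Aux

section DB
lemma exists_dual_basis (B P : Type*) [CommRing B] [AddCommGroup P] [Module B P]
    [Module.Finite B P] [Module.Projective B P] :
    ∃ (n : ℕ) (p : Fin n → P) (f : Fin n → (P →ₗ[B] B)),
      ∀ x, ∑ i, f i x • p i = x := by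
  obtain ⟨n, F, G, hsurj, hinj, hFG⟩ := Module.Finite.exists_comp_eq_id_of_projective B P
  refine ⟨n, fun i => F (Pi.single i 1), fun i => (LinearMap.proj i) ∘ₗ G, fun x => ?_⟩
  have h1 : ∑ i, ((LinearMap.proj i ∘ₗ G : P →ₗ[B] B) x) • F (Pi.single i 1)
      = F (∑ i, (G x i) • (Pi.single i (1 : B) : Fin n → B)) := by
    rw [map_sum]
    exact Finset.sum_congr rfl fun i _ => (map_smul F _ _).symm
  have h2 : ∑ i, (G x i) • (Pi.single i (1 : B) : Fin n → B) = G x := by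
    funext j
    simp [Pi.single_apply, Finset.sum_apply]
  rw [h1, h2]
  exact congrArg (fun h => h x) hFG
end DB
section Main
open TensorProduct
variable {A B : Type*} [CommRing A] [CommRing B]
variable {P : Type*} [AddCommGroup P] [Module A P] [Module B P] [SMulCommClass A B P]

variable (B) in
def toDual (φ : P →ₗ[B] B) : DualMod B P := φ

@[simp] lemma toDual_lin (φ : P →ₗ[B] B) : (toDual B φ).lin = φ := rfl

variable (N : Type*) [AddCommGroup N] [Module B N]
variable (M : Type*) [AddCommGroup M] [Module A M]
variable {n : ℕ} (p : Fin n → P) (f : Fin n → (P →ₗ[B] B))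

lemma sum_smul_toDual_eq (hpf : ∀ x, ∑ i, f i x • p i = x) (a : A) (j : Fin n) :
    ∑ i, f j (a • p i) • toDual B (f i) = a • toDual B (f j) := by
  apply DualMod.ext'
  intro q
  rw [DualMod.lin_sum, dualModule_smul_apply, toDual_lin]
  conv_rhs => rw [← hpf q, Finset.smul_sum, map_sum]
  refine Finset.sum_congr rfl fun i _ => ?_
  rw [DualMod.lin_smulB, toDual_lin, smul_comm a (f i q) (p i),
    (f j).map_smul (f i q) (a • p i), smul_eq_mul, smul_eq_mul, mul_comm]

lemma key (hpf : ∀ x, ∑ i, f i x • p i = x)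
    (g : (DualMod B P) ⊗[A] M →ₗ[B] N) (a : A) (m : M) :
    ∑ i, (a • p i) ⊗ₜ[B] g (toDual B (f i) ⊗ₜ[A] m)
      = ∑ j, p j ⊗ₜ[B] g ((a • toDual B (f j)) ⊗ₜ[A] m) := by
  have step1 : ∀ i, (a • p i) ⊗ₜ[B] g (toDual B (f i) ⊗ₜ[A] m)
      = ∑ j, p j ⊗ₜ[B] (f j (a • p i) • g (toDual B (f i) ⊗ₜ[A] m)) := by
    intro i
    conv_lhs => rw [← hpf (a • p i)]
    rw [sum_tmul]
    exact Finset.sum_congr rfl fun j _ => smul_tmul _ _ _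
  simp_rw [step1]
  rw [Finset.sum_comm]
  refine Finset.sum_congr rfl fun j _ => ?_
  rw [← tmul_sum]
  congr 1
  have h2 : ∀ i, f j (a • p i) • g (toDual B (f i) ⊗ₜ[A] m)
      = g ((f j (a • p i) • toDual B (f i)) ⊗ₜ[A] m) := fun i =>
    (g.map_smul _ _).symm.trans (congrArg g (smul_tmul' _ _ _))
  simp_rw [h2]
  rw [← map_sum, ← sum_tmul, sum_smul_toDual_eq p f hpf]

noncomputable def bwd (hpf : ∀ x, ∑ i, f i x • p i = x)
    (g : (DualMod B P) ⊗[A] M →ₗ[B] N) : M →ₗ[A] P ⊗[B] N where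
  toFun m := ∑ i, p i ⊗ₜ[B] g (toDual B (f i) ⊗ₜ[A] m)
  map_add' m m' := by
    show ∑ i, p i ⊗ₜ[B] g (toDual B (f i) ⊗ₜ[A] (m + m')) = _
    have h : ∀ i, p i ⊗ₜ[B] g (toDual B (f i) ⊗ₜ[A] (m + m'))
        = p i ⊗ₜ[B] g (toDual B (f i) ⊗ₜ[A] m)
          + p i ⊗ₜ[B] g (toDual B (f i) ⊗ₜ[A] m') := fun i => by
      rw [tmul_add, map_add, tmul_add]
    simp_rw [h]
    rw [Finset.sum_add_distrib]
  map_smul' a m := by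
    show ∑ i, p i ⊗ₜ[B] g (toDual B (f i) ⊗ₜ[A] (a • m))
      = a • ∑ i, p i ⊗ₜ[B] g (toDual B (f i) ⊗ₜ[A] m)
    have h1 : ∀ i, toDual B (f i) ⊗ₜ[A] (a • m) = (a • toDual B (f i)) ⊗ₜ[A] m := fun i => by
      rw [tmul_smul, smul_tmul']
    simp_rw [h1]
    rw [← key N M p f hpf g a m, Finset.smul_sum]
    exact Finset.sum_congr rfl fun i _ => (smul_tmul' a (p i) _).symm

lemma bwd_fwd (hpf : ∀ x, ∑ i, f i x • p i = x) (φ : M →ₗ[A] P ⊗[B] N) :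
    bwd N M p f hpf (fwd N M φ) = φ := by
  ext m
  show ∑ i, p i ⊗ₜ[B] contractMap N (toDual B (f i)) (φ m) = φ m
  generalize φ m = x
  induction x with
  | zero => simp
  | tmul q n =>
      simp only [contractMap_tmul, toDual_lin]
      have : ∀ i, (p i) ⊗ₜ[B] (f i q • n) = (f i q • p i) ⊗ₜ[B] n := fun i =>
        (smul_tmul _ _ _).symm
      simp_rw [this]
      rw [← sum_tmul, hpf]
  | add x y hx hy =>
      have h : ∀ i, p i ⊗ₜ[B] contractMap N (toDual B (f i)) (x + y)
          = p i ⊗ₜ[B] contractMap N (toDual B (f i)) x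
            + p i ⊗ₜ[B] contractMap N (toDual B (f i)) y := fun i => by
        rw [map_add, tmul_add]
      simp_rw [h]
      rw [Finset.sum_add_distrib, hx, hy]

lemma fwd_bwd (hpf : ∀ x, ∑ i, f i x • p i = x) (g : (DualMod B P) ⊗[A] M →ₗ[B] N) :
    fwd N M (bwd N M p f hpf g) = g := by
  apply LinearMap.ext
  intro x
  induction x with
  | zero => simp
  | tmul f0 m =>
      rw [fwd_tmul]
      show contractMap N f0 (∑ i, p i ⊗ₜ[B] g (toDual B (f i) ⊗ₜ[A] m)) = _
      rw [map_sum]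
      simp only [contractMap_tmul]
      have h2 : ∀ i, f0.lin (p i) • g (toDual B (f i) ⊗ₜ[A] m)
          = g ((f0.lin (p i) • toDual B (f i)) ⊗ₜ[A] m) := fun i =>
        (g.map_smul _ _).symm.trans (congrArg g (smul_tmul' _ _ _))
      simp_rw [h2]
      rw [← map_sum, ← sum_tmul]
      congr 2
      apply DualMod.ext'
      intro q
      rw [DualMod.lin_sum]
      conv_rhs => rw [show f0.lin q = f0.lin (∑ i, f i q • p i) by rw [hpf], map_sum]
      refine Finset.sum_congr rfl fun i _ => ?_
      rw [DualMod.lin_smulB, toDual_lin, map_smul, smul_eq_mul, smul_eq_mul, mul_comm]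
  | add x y hx hy => rw [map_add, map_add, hx, hy]

end Main

/-- let `P` be a `(B,A)`-bimodule which is finitely generated and projective
as a `B`-module, and `P^∨ = Hom_B(P,B)` its dual, an `(A,B)`-bimodule via
`(a • f) p = f (a • p)`.  Then for every `A`-module `M` and `B`-module `N` there is a
bijection `Hom_A(M, N ⊗_B P) ≃ Hom_B(M ⊗_A P^∨, N)`, natural in `M` and `N`; it is given
by `φ ↦ (f ⊗ m ↦ (f ⊗ id_N)(φ m))`, contracting with the evaluation. -/
theorem dual_bimodule_hom_equiv (A B : Type*) [CommRing A] [CommRing B]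
    (P : Type*) [AddCommGroup P] [Module A P] [Module B P] [SMulCommClass A B P]
    [Module.Finite B P] [Module.Projective B P] :
    ∃ e : ∀ (M : Type v) [AddCommGroup M] [Module A M]
        (N : Type w) [AddCommGroup N] [Module B N],
        (M →ₗ[A] P ⊗[B] N) ≃ ((DualMod B P) ⊗[A] M →ₗ[B] N),
      ∀ (M : Type v) [AddCommGroup M] [Module A M]
        (N : Type w) [AddCommGroup N] [Module B N]
        (φ : M →ₗ[A] P ⊗[B] N) (f : DualMod B P) (m : M),
        e M N φ (f ⊗ₜ[A] m) =
          TensorProduct.lift ((LinearMap.lsmul B N) ∘ₗ f.lin) (φ m) := by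
  obtain ⟨n, p, f, hpf⟩ := exists_dual_basis B P
  exact ⟨fun M _ _ N _ _ =>
    { toFun := fwd N M
      invFun := bwd N M p f hpf
      left_inv := bwd_fwd N M p f hpf
      right_inv := fwd_bwd N M p f hpf },
    fun M _ _ N _ _ φ f0 m => fwd_tmul N M φ f0 m⟩
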